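/- arXiv:2508.20434 — 2 statements merged into one kernel-verified Lean document; each statement's English description precedes it below -/
import Mathlib

section
/- Fix finite types A and B. Let V := (A ⊕ B) → ℝ, a finite-dimensional real vector space with standard basis vectors (e_η) for η ∈ A ⊕ B, and let U := (A ⊕ B) → ℝ, regarded as dual to V via the perfect pairing ⟨u, v⟩ := ∑_{η} u(η)·v(η). Fix c : A → ℝ with c(ρ) > 0 for every ρ ∈ A and a : B → A → ℝ with a(Y)(ρ) ≥ 0 for all Y ∈ B, ρ ∈ A. For ρ ∈ A set Ξ_ρ := c(ρ)·e_ρ ∈ V, and for Y ∈ B set Ξ_Y := e_Y + ∑_{ρ ∈ A} a(Y)(ρ)·c(ρ)·e_ρ ∈ V. For ρ ∈ A set Ξ*_ρ := c(ρ)⁻¹·e_ρ − ∑_{Y ∈ B} a(Y)(ρ)·e_Y ∈ U, and for Y ∈ B set Ξ*_Y := e_Y ∈ U. Fix a natural number d and a map w : A → (Fin d → ℝ); let β' : V →ₗ[ℝ] (Fin d → ℝ) be the linear map with β'(e_ρ) = w(ρ) for ρ ∈ A and β'(e_Y) = 0 for Y ∈ B, and for a linear functional m : (Fin d → ℝ)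 →ₗ[ℝ] ℝ let α(m) ∈ U be the element with α(m)(ρ) = m(w(ρ)) for ρ ∈ A and α(m)(Y) = 0 for Y ∈ B. Then the dual cone of the intersection of ker β' with the cone generated by the Ξ_η equals the sum of the image of α and the cone generated by the Ξ*_η: { u ∈ U | ∀ v ∈ V, (β'(v) = 0 and v = ∑_η s(η)·Ξ_η for some s : A ⊕ B → ℝ with s ≥ 0) → ⟨u, v⟩ ≥ 0 } = { α(m) + ∑_{η} t(η)·Ξ*_η | m a linear functional on Fin d → ℝ, t : A ⊕ B → ℝ with t ≥ 0 }. -/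
/-- Carathéodory-type lemma for cones: any nonnegative combination can be rewritten as a
nonnegative combination supported on a linearly independent subfamily. -/
lemma cone_caratheodory {ι : Type*} [Fintype ι] [DecidableEq ι] {E : Type*} [AddCommGroup E]
    [Module ℝ E] (g : ι → E) :
    ∀ (n : ℕ) (s : ι → ℝ), (∀ i, 0 ≤ s i) →
      (Finset.univ.filter (fun i => s i ≠ 0)).card ≤ n →
      ∃ (T : Finset ι) (t : ι → ℝ), (∀ i, 0 ≤ t i) ∧ (∀ i ∉ T, t i = 0) ∧
        LinearIndependent ℝ (fun i : T => g (i : ι)) ∧ ∑ i, t i • g i = ∑ i, s i • g i := by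
  intro n
  induction n with
  | zero =>
    intro s hs hcard
    have hzero : ∀ i, s i = 0 := by
      intro i
      by_contra hi
      have : i ∈ Finset.univ.filter (fun i => s i ≠ 0) := by simp [hi]
      have := Finset.card_pos.mpr ⟨i, this⟩
      omega
    refine ⟨∅, s, hs, fun i _ => hzero i, ?_, rfl⟩
    haveI : IsEmpty ((∅ : Finset ι) : Type _) := by
      simp [Finset.isEmpty_coe_sort]
      exact ⟨fun x => x.2⟩
    exact linearIndependent_empty_type
  | succ n ih =>
    intro s hs hcard
    set supp := Finset.univ.filter (fun i => s i ≠ 0) with hsupp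
    by_cases hli : LinearIndependent ℝ (fun i : supp => g (i : ι))
    · exact ⟨supp, s, hs, fun i hi => by simpa [hsupp] using hi, hli, rfl⟩
    · obtain ⟨cf, hcf, i₁, hi₁⟩ := Fintype.not_linearIndependent_iff.mp hli
      set ce : ι → ℝ := fun i => if h : i ∈ supp then cf ⟨i, h⟩ else 0 with hce
      have hce_supp : ∀ i ∉ supp, ce i = 0 := fun i hi => by simp [hce, hi]
      have hce_sum : ∑ i, ce i • g i = 0 := by
        rw [← Finset.sum_subset (Finset.subset_univ supp)
          (fun i _ hi => by rw [hce_supp i hi, zero_smul])]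
        rw [← Finset.sum_attach supp (fun i => ce i • g i)]
        rw [← hcf]
        apply Finset.sum_congr rfl
        intro i _
        simp [hce, i.2]
      -- an auxiliary step to handle both signs of the relation uniformly
      have key : ∀ cc : ι → ℝ, (∀ i ∉ supp, cc i = 0) → (∑ i, cc i • g i = 0) →
          (∃ i, 0 < cc i) →
          ∃ (T : Finset ι) (t : ι → ℝ), (∀ i, 0 ≤ t i) ∧ (∀ i ∉ T, t i = 0) ∧
            LinearIndependent ℝ (fun i : T => g (i : ι)) ∧ ∑ i, t i • g i = ∑ i, s i • g i := by
        intro cc hccsupp hccsum ⟨ip, hip⟩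
        set P := Finset.univ.filter (fun i => 0 < cc i) with hP
        have hPne : P.Nonempty := ⟨ip, by simp [hP, hip]⟩
        obtain ⟨i₀, hi₀P, hmin⟩ := Finset.exists_min_image P (fun i => s i / cc i) hPne
        have hcc₀ : 0 < cc i₀ := by simpa [hP] using hi₀P
        set r := s i₀ / cc i₀ with hr
        have hr0 : 0 ≤ r := div_nonneg (hs i₀) hcc₀.le
        set s' : ι → ℝ := fun i => s i - r * cc i with hs'
        have hs'0 : ∀ i, 0 ≤ s' i := by
          intro i
          by_cases hi : 0 < cc i
          · have := hmin i (by simp [hP, hi])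
            have : r * cc i ≤ s i := by
              rw [le_div_iff₀ hi] at this
              linarith
            simp [hs']; linarith
          · push_neg at hi
            have : r * cc i ≤ 0 := mul_nonpos_of_nonneg_of_nonpos hr0 hi
            have := hs i
            simp [hs']; linarith
        have hs'i₀ : s' i₀ = 0 := by
          simp [hs', hr, div_mul_cancel₀ _ hcc₀.ne']
        have hsubset : Finset.univ.filter (fun i => s' i ≠ 0) ⊆ supp.erase i₀ := by
          intro i hi
          simp only [Finset.mem_filter, Finset.mem_univ, true_and] at hi
          refine Finset.mem_erase.mpr ⟨?_, ?_⟩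
          · rintro rfl; exact hi hs'i₀
          · simp only [hsupp, Finset.mem_filter, Finset.mem_univ, true_and]
            intro hsi
            apply hi
            by_cases hmem : i ∈ supp
            · simp only [hsupp, Finset.mem_filter, Finset.mem_univ, true_and] at hmem
              exact absurd hsi hmem
            · simp [hs', hsi, hccsupp i hmem]
        have hi₀supp : i₀ ∈ supp := by
          by_contra hmem
          exact absurd (hccsupp i₀ hmem) hcc₀.ne'
        have hcard' : (Finset.univ.filter (fun i => s' i ≠ 0)).card ≤ n := by
          have h1 := Finset.card_le_card hsubset
          have h2 := Finset.card_erase_of_mem hi₀supp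
          omega
        have hsum' : ∑ i, s' i • g i = ∑ i, s i • g i := by
          simp only [hs', sub_smul, Finset.sum_sub_distrib, mul_smul, ← Finset.smul_sum,
            hccsum, smul_zero, sub_zero]
        obtain ⟨T, t, ht0, htsupp, htli, htsum⟩ := ih s' hs'0 hcard'
        exact ⟨T, t, ht0, htsupp, htli, htsum.trans hsum'⟩
      rcases lt_or_gt_of_ne hi₁ with hneg | hpos
      · refine key (-ce) (fun i hi => by simp [hce_supp i hi]) (by simpa using hce_sum) ?_
        refine ⟨i₁, ?_⟩
        have : ce (i₁ : ι) = cf i₁ := by simp [hce, i₁.2]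
        simp [this]; linarith
      · refine key ce hce_supp hce_sum ⟨i₁, ?_⟩
        have : ce (i₁ : ι) = cf i₁ := by simp [hce, i₁.2]
        simp [this]; linarith


/-- A finitely generated cone in a finite-dimensional normed space is closed. -/
lemma cone_isClosed {ι : Type*} [Fintype ι] [DecidableEq ι] {E : Type*} [NormedAddCommGroup E]
    [NormedSpace ℝ E] [FiniteDimensional ℝ E] (g : ι → E) :
    IsClosed {y : E | ∃ s : ι → ℝ, (∀ i, 0 ≤ s i) ∧ y = ∑ i, s i • g i} := by
  classical
  have hset : {y : E | ∃ s : ι → ℝ, (∀ i, 0 ≤ s i) ∧ y = ∑ i, s i • g i}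
      = ⋃ T ∈ {T : Finset ι | LinearIndependent ℝ (fun i : T => g (i : ι))},
          (Fintype.linearCombination ℝ (fun i : T => g (i : ι))) ''
            {t : T → ℝ | ∀ i, 0 ≤ t i} := by
    ext y
    simp only [Set.mem_setOf_eq, Set.mem_iUnion, Set.mem_image, exists_prop]
    constructor
    · rintro ⟨s, hs0, rfl⟩
      obtain ⟨T, t, ht0, htsupp, htli, htsum⟩ :=
        cone_caratheodory g (Finset.univ.filter (fun i => s i ≠ 0)).card s hs0 le_rfl
      refine ⟨T, htli, fun i => t (i : ι), fun i => ht0 _, ?_⟩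
      rw [Fintype.linearCombination_apply]
      rw [← htsum]
      rw [← Finset.sum_subset (Finset.subset_univ T)
        (fun i _ hi => by rw [htsupp i hi, zero_smul])]
      exact (Finset.sum_attach T (fun i => t i • g i))
    · rintro ⟨T, hTli, t, ht0, rfl⟩
      refine ⟨fun i => if h : i ∈ T then t ⟨i, h⟩ else 0, fun i => ?_, ?_⟩
      · by_cases h : i ∈ T <;> simp [h, ht0 _]
      · rw [Fintype.linearCombination_apply]
        rw [← Finset.sum_subset (Finset.subset_univ T)
          (fun i _ hi => by simp [hi])]
        rw [← Finset.sum_attach T (fun i => (if h : i ∈ T then t ⟨i, h⟩ else 0) • g i)]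
        apply Finset.sum_congr rfl
        intro i _
        simp [i.2]
  rw [hset]
  apply Set.Finite.isClosed_biUnion (Set.toFinite _)
  intro T hT
  have hker : LinearMap.ker (Fintype.linearCombination ℝ (fun i : T => g (i : ι))) = ⊥ := by
    rw [LinearMap.ker_eq_bot']
    intro cf hcf
    rw [Fintype.linearCombination_apply] at hcf
    exact funext (Fintype.linearIndependent_iff.mp hT cf hcf)
  have hemb := LinearMap.isClosedEmbedding_of_injective hker
  apply hemb.isClosedMap
  have : {t : T → ℝ | ∀ i, 0 ≤ t i} = ⋂ i, {t : T → ℝ | 0 ≤ t i} := by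
    ext t; simp [Set.mem_iInter]
  rw [this]
  exact isClosed_iInter fun i => isClosed_le continuous_const (continuous_apply i)

/-- Farkas-type lemma: if a linear functional `u'` is nonnegative on the cone
`{s ≥ 0 : ∑ s i • x i = 0}`, then it is of the form `m ∘ x + t` with `t ≥ 0`. -/
lemma farkas_cone {n : Type*} [Fintype n] [DecidableEq n] {d : ℕ}
    (x : n → (Fin d → ℝ)) (u' : n → ℝ)
    (h : ∀ s : n → ℝ, (∀ i, 0 ≤ s i) → (∑ i, s i • x i) = 0 → 0 ≤ ∑ i, s i * u' i) :
    ∃ (m : (Fin d → ℝ) →ₗ[ℝ] ℝ) (t : n → ℝ), (∀ i, 0 ≤ t i) ∧ ∀ i, u' i = m (x i) + t i := by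
  classical
  set g : (Fin d ⊕ Fin d) ⊕ n → (n → ℝ) :=
    Sum.elim (Sum.elim (fun k i => x i k) (fun k i => -(x i k))) (fun j => Pi.single j 1)
    with hg
  set D : Set (n → ℝ) := {y | ∃ s : (Fin d ⊕ Fin d) ⊕ n → ℝ, (∀ a, 0 ≤ s a) ∧ y = ∑ a, s a • g a} with hD
  have hDclosed : IsClosed D := cone_isClosed g
  -- membership in D gives the conclusion
  suffices hu : u' ∈ D by
    obtain ⟨s, hs0, hsum⟩ := hu
    refine ⟨∑ k, (s (.inl (.inl k)) - s (.inl (.inr k))) • LinearMap.proj k,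
      fun j => s (.inr j), fun j => hs0 _, fun i => ?_⟩
    have hval := congrFun hsum i
    simp only [Finset.sum_apply, Pi.smul_apply, smul_eq_mul, Fintype.sum_sum_type, hg,
      Sum.elim_inl, Sum.elim_inr, Pi.single_apply, mul_ite, mul_one, mul_zero,
      Finset.sum_ite_eq, Finset.mem_univ, if_true, Pi.neg_apply, mul_neg] at hval
    simp only [LinearMap.sum_apply, LinearMap.smul_apply, LinearMap.proj_apply,
      smul_eq_mul, sub_mul]
    rw [hval, Finset.sum_neg_distrib, Finset.sum_sub_distrib]
    ring
  -- otherwise, separate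
  by_contra hu
  set e : EuclideanSpace ℝ n ≃L[ℝ] (n → ℝ) := EuclideanSpace.equiv n ℝ with he
  have hsmulD : ∀ (r : ℝ), 0 < r → ∀ y ∈ D, r • y ∈ D := by
    rintro r hr y ⟨s, hs0, rfl⟩
    exact ⟨r • s, fun a => mul_nonneg hr.le (hs0 a),
      by rw [Finset.smul_sum]; exact Finset.sum_congr rfl fun a _ => (smul_smul r (s a) (g a))⟩
  have haddD : ∀ y ∈ D, ∀ z ∈ D, y + z ∈ D := by
    rintro y ⟨s, hs0, rfl⟩ z ⟨s', hs'0, rfl⟩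
    exact ⟨s + s', fun a => add_nonneg (hs0 a) (hs'0 a),
      by rw [← Finset.sum_add_distrib]; exact Finset.sum_congr rfl fun a _ => (add_smul _ _ _).symm⟩
  set K : ConvexCone ℝ (EuclideanSpace ℝ n) :=
    { carrier := e ⁻¹' D
      smul_mem' := fun r hr y hy => by
        simp only [Set.mem_preimage, map_smul] at *
        exact hsmulD r hr _ hy
      add_mem' := fun y hy z hz => by
        simp only [Set.mem_preimage, map_add] at *
        exact haddD _ hy _ hz } with hK
  have hKne : (K : Set (EuclideanSpace ℝ n)).Nonempty := by
    refine ⟨0, ?_⟩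
    show e 0 ∈ D
    rw [map_zero]
    exact ⟨0, fun a => le_rfl, by simp⟩
  have hKclosed : IsClosed (K : Set (EuclideanSpace ℝ n)) :=
    hDclosed.preimage e.continuous
  have hbK : e.symm u' ∉ K := by
    intro hmem
    have : u' ∈ D := by have h2 : e (e.symm u') ∈ D := hmem; simpa using h2
    exact hu this
  have h0K : (0 : EuclideanSpace ℝ n) ∈ K := by
    show e 0 ∈ D
    rw [map_zero]
    exact ⟨0, fun a => le_rfl, by simp⟩
  obtain ⟨y, hy1, hy2⟩ :=
    ProperCone.hyperplane_separation' (E := EuclideanSpace ℝ n)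
      ({ carrier := (K : Set (EuclideanSpace ℝ n)), zero_mem' := h0K,
         add_mem' := fun hy hz => K.add_mem hy hz,
         smul_mem' := fun r x hx => by
           rcases eq_or_ne r 0 with rfl | hr
           · simpa using h0K
           · exact K.smul_mem (show (0:ℝ) < r from lt_of_le_of_ne r.2 (Ne.symm (NNReal.coe_ne_zero.mpr hr))) hx,
         isClosed' := hKclosed } : ProperCone ℝ (EuclideanSpace ℝ n)) hbK
  set Y : n → ℝ := e y with hY
  -- generators are in K
  have hgen : ∀ a, e.symm (g a) ∈ K := by
    intro a
    show e (e.symm (g a)) ∈ D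
    rw [e.apply_symm_apply]
    refine ⟨Pi.single a 1, fun b => ?_, ?_⟩
    · rcases eq_or_ne b a with rfl | hb
      · simp
      · simp [Pi.single_eq_of_ne hb]
    rw [Finset.sum_eq_single a (fun b _ hb => by simp [Pi.single_apply, hb]) (by simp)]
    simp
  have hinner : ∀ a, 0 ≤ ∑ i, g a i * Y i := by
    intro a
    have := hy1 _ (hgen a)
    rw [PiLp.inner_apply] at this
    refine this.trans_eq (Finset.sum_congr rfl fun i _ => ?_)
    exact (mul_comm (Y i) (g a i) : _)
  have hY0 : ∀ j, 0 ≤ Y j := by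
    intro j
    have := hinner (.inr j)
    simp only [hg, Sum.elim_inr, Pi.single_apply, ite_mul, one_mul, zero_mul,
      Finset.sum_ite_eq', Finset.mem_univ, if_true] at this
    exact this
  have hker : ∑ i, Y i • x i = 0 := by
    funext k
    have h1 := hinner (.inl (.inl k))
    have h2 := hinner (.inl (.inr k))
    simp only [hg, Sum.elim_inl, Sum.elim_inr, neg_mul, Finset.sum_neg_distrib,
      neg_nonneg] at h1 h2
    have heq : ∑ i, x i k * Y i = 0 := le_antisymm h2 h1
    simp only [Finset.sum_apply, Pi.smul_apply, smul_eq_mul, Pi.zero_apply]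
    rw [← heq]
    exact Finset.sum_congr rfl fun i _ => mul_comm _ _
  have hpos : (0:ℝ) ≤ ∑ i, Y i * u' i := h Y hY0 hker
  have hneg : ∑ i, Y i * u' i < 0 := by
    rw [PiLp.inner_apply] at hy2
    exact hy2
  linarith

/-- The dual cone of `Ker β'_orb ∩ ∑_η ℝ_{≥0} Ξ_η` (the orbifold movable cone of
curves) equals `Im(α_orb) + ∑_η ℝ_{≥0} Ξ*_η`; this is the linear-algebraic content
of the description of the orbifold pseudo-effective cone of a split toric stack. -/
theorem dual_cone_of_movable_cone
    {A B : Type*} [Fintype A] [Fintype B] [DecidableEq A] [DecidableEq B]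
    (c : A → ℝ) (hc : ∀ ρ : A, 0 < c ρ)
    (a : B → A → ℝ) (ha : ∀ (Y : B) (ρ : A), 0 ≤ a Y ρ)
    (Ξ : A ⊕ B → ((A ⊕ B) → ℝ))
    (hΞA : ∀ ρ : A, Ξ (Sum.inl ρ) = c ρ • (Pi.single (Sum.inl ρ) 1 : (A ⊕ B) → ℝ))
    (hΞB : ∀ Y : B, Ξ (Sum.inr Y) =
      (Pi.single (Sum.inr Y) 1 : (A ⊕ B) → ℝ)
        + ∑ ρ : A, (a Y ρ * c ρ) • (Pi.single (Sum.inl ρ) 1 : (A ⊕ B) → ℝ))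
    (Ξs : A ⊕ B → ((A ⊕ B) → ℝ))
    (hΞsA : ∀ ρ : A, Ξs (Sum.inl ρ) =
      (c ρ)⁻¹ • (Pi.single (Sum.inl ρ) 1 : (A ⊕ B) → ℝ)
        - ∑ Y : B, a Y ρ • (Pi.single (Sum.inr Y) 1 : (A ⊕ B) → ℝ))
    (hΞsB : ∀ Y : B, Ξs (Sum.inr Y) = (Pi.single (Sum.inr Y) 1 : (A ⊕ B) → ℝ))
    (d : ℕ) (w : A → (Fin d → ℝ))
    (β' : ((A ⊕ B) → ℝ) →ₗ[ℝ] (Fin d → ℝ))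
    (hβA : ∀ ρ : A, β' (Pi.single (Sum.inl ρ) 1) = w ρ)
    (hβB : ∀ Y : B, β' (Pi.single (Sum.inr Y) 1) = 0)
    (α : ((Fin d → ℝ) →ₗ[ℝ] ℝ) → ((A ⊕ B) → ℝ))
    (hαA : ∀ (m : (Fin d → ℝ) →ₗ[ℝ] ℝ) (ρ : A), α m (Sum.inl ρ) = m (w ρ))
    (hαB : ∀ (m : (Fin d → ℝ) →ₗ[ℝ] ℝ) (Y : B), α m (Sum.inr Y) = 0) :
    {u : (A ⊕ B) → ℝ | ∀ v : (A ⊕ B) → ℝ,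
        (β' v = 0 ∧ ∃ s : A ⊕ B → ℝ, (∀ η : A ⊕ B, 0 ≤ s η) ∧ v = ∑ η : A ⊕ B, s η • Ξ η)
          → 0 ≤ ∑ x : A ⊕ B, u x * v x}
      = {u : (A ⊕ B) → ℝ |
          ∃ (m : (Fin d → ℝ) →ₗ[ℝ] ℝ) (t : A ⊕ B → ℝ),
            (∀ η : A ⊕ B, 0 ≤ t η) ∧ u = α m + ∑ η : A ⊕ B, t η • Ξs η} := by
  classical
  -- coordinate formulas
  have ΞcoordA : ∀ (ρ : A) (x : A ⊕ B), Ξ (.inl ρ) x = if x = .inl ρ then c ρ else 0 := by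
    intro ρ x
    rw [hΞA]
    simp [Pi.single_apply, mul_ite]
  have ΞcoordB1 : ∀ (Y : B) (ρ' : A), Ξ (.inr Y) (.inl ρ') = a Y ρ' * c ρ' := by
    intro Y ρ'
    rw [hΞB]
    simp [Pi.single_apply, Finset.sum_apply, mul_ite, Finset.sum_ite_eq]
  have ΞcoordB2 : ∀ (Y Y' : B), Ξ (.inr Y) (.inr Y') = if Y' = Y then 1 else 0 := by
    intro Y Y'
    rw [hΞB]
    simp [Pi.single_apply, Finset.sum_apply]
  have ΞscoordA1 : ∀ (ρ ρ' : A), Ξs (.inl ρ) (.inl ρ') = if ρ' = ρ then (c ρ)⁻¹ else 0 := by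
    intro ρ ρ'
    rw [hΞsA]
    simp [Pi.single_apply, Finset.sum_apply, mul_ite]
  have ΞscoordA2 : ∀ (ρ : A) (Y' : B), Ξs (.inl ρ) (.inr Y') = -(a Y' ρ) := by
    intro ρ Y'
    rw [hΞsA]
    simp [Pi.single_apply, Finset.sum_apply, mul_ite, Finset.sum_ite_eq]
  have ΞscoordB : ∀ (Y : B) (x : A ⊕ B), Ξs (.inr Y) x = if x = .inr Y then 1 else 0 := by
    intro Y x
    rw [hΞsB]
    simp [Pi.single_apply]
  -- pairing against Ξ
  have pairA : ∀ (z : (A ⊕ B) → ℝ) (ρ : A),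
      ∑ x : A ⊕ B, z x * Ξ (.inl ρ) x = z (.inl ρ) * c ρ := by
    intro z ρ
    simp only [ΞcoordA, mul_ite, mul_zero]
    rw [Finset.sum_ite_eq' Finset.univ (Sum.inl ρ : A ⊕ B) (fun x => z x * c ρ)]
    simp
  have pairB : ∀ (z : (A ⊕ B) → ℝ) (Y : B),
      ∑ x : A ⊕ B, z x * Ξ (.inr Y) x
        = z (.inr Y) + ∑ ρ : A, z (.inl ρ) * (a Y ρ * c ρ) := by
    intro z Y
    rw [Fintype.sum_sum_type]
    simp only [ΞcoordB1, ΞcoordB2, mul_ite, mul_one, mul_zero]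
    rw [Finset.sum_ite_eq' Finset.univ Y (fun Y' => z (.inr Y'))]
    simp [add_comm]
  -- expansion in the dual basis
  have expand : ∀ z : (A ⊕ B) → ℝ,
      ∑ η : A ⊕ B, (∑ x : A ⊕ B, z x * Ξ η x) • Ξs η = z := by
    intro z
    funext x₀
    rw [Finset.sum_apply]
    rw [Fintype.sum_sum_type]
    simp only [Pi.smul_apply, smul_eq_mul]
    cases x₀ with
    | inl ρ₀ =>
      simp only [pairA, pairB, ΞscoordA1, ΞscoordB]
      simp only [mul_ite, mul_zero, reduceCtorEq, if_false, Finset.sum_const_zero, add_zero]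
      rw [Finset.sum_ite_eq Finset.univ ρ₀ (fun ρ => z (.inl ρ) * c ρ * (c ρ)⁻¹)]
      simp [mul_assoc, mul_inv_cancel₀ (hc ρ₀).ne']
    | inr Y₀ =>
      simp only [pairA, pairB, ΞscoordA2, ΞscoordB]
      simp only [mul_ite, mul_one, mul_zero, Sum.inr.injEq]
      rw [Finset.sum_ite_eq Finset.univ Y₀
        (fun Y => z (.inr Y) + ∑ ρ : A, z (.inl ρ) * (a Y ρ * c ρ))]
      simp only [Finset.mem_univ, if_true, mul_neg]
      rw [Finset.sum_neg_distrib]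
      have : ∑ ρ : A, z (.inl ρ) * c ρ * a Y₀ ρ = ∑ ρ : A, z (.inl ρ) * (a Y₀ ρ * c ρ) :=
        Finset.sum_congr rfl fun ρ _ => by ring
      rw [this]
      ring
  -- the pairing with α m computes β'
  have hαpair : ∀ (m : (Fin d → ℝ) →ₗ[ℝ] ℝ) (v : (A ⊕ B) → ℝ),
      ∑ x : A ⊕ B, α m x * v x = m (β' v) := by
    intro m v
    have hv : v = ∑ x : A ⊕ B, v x • (Pi.single x 1 : (A ⊕ B) → ℝ) := by
      conv_lhs => rw [← Finset.univ_sum_single v]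
      refine Finset.sum_congr rfl fun x _ => ?_
      rw [← Pi.single_smul, smul_eq_mul, mul_one]
    have hβv : β' v = ∑ ρ : A, v (.inl ρ) • w ρ := by
      conv_lhs => rw [hv]
      rw [map_sum]
      rw [Fintype.sum_sum_type]
      simp only [map_smul, hβA, hβB, smul_zero, Finset.sum_const_zero, add_zero]
    rw [hβv, map_sum]
    rw [Fintype.sum_sum_type]
    simp only [hαA, hαB, zero_mul, Finset.sum_const_zero, add_zero, map_smul, smul_eq_mul]
    exact Finset.sum_congr rfl fun ρ _ => mul_comm _ _
  -- dual basis pairing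
  have pairdual : ∀ η η' : A ⊕ B,
      ∑ x : A ⊕ B, Ξs η x * Ξ η' x = if η = η' then 1 else 0 := by
    intro η η'
    cases η' with
    | inl ρ' =>
      rw [pairA]
      cases η with
      | inl ρ =>
        rw [ΞscoordA1]
        by_cases hr : ρ' = ρ
        · subst hr; simp [inv_mul_cancel₀ (hc ρ').ne']
        · simp [hr, Ne.symm hr]
      | inr Y =>
        rw [ΞscoordB]
        simp
    | inr Y' =>
      rw [pairB]
      cases η with
      | inl ρ =>
        rw [ΞscoordA2]
        simp only [ΞscoordA1, ite_mul, zero_mul]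
        rw [Finset.sum_ite_eq' Finset.univ ρ (fun ρ'' => (c ρ)⁻¹ * (a Y' ρ'' * c ρ''))]
        simp only [Finset.mem_univ, if_true, reduceCtorEq, if_false]
        rw [mul_comm ((c ρ)⁻¹), mul_assoc, mul_inv_cancel₀ (hc ρ).ne', mul_one, neg_add_cancel]
      | inr Y =>
        simp only [ΞscoordB, reduceCtorEq, if_false, zero_mul, Finset.sum_const_zero, add_zero,
          Sum.inr.injEq]
        by_cases hY : Y = Y'
        · subst hY; simp
        · simp [hY, Ne.symm hY]
  ext u
  simp only [Set.mem_setOf_eq]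
  constructor
  · -- hard direction
    intro hu
    set u' : A ⊕ B → ℝ := fun η => ∑ x : A ⊕ B, u x * Ξ η x with hu'
    have h' : ∀ s : A ⊕ B → ℝ, (∀ η, 0 ≤ s η) → (∑ η, s η • β' (Ξ η)) = 0 →
        0 ≤ ∑ η, s η * u' η := by
      intro s hs0 hker
      have hβv : β' (∑ η : A ⊕ B, s η • Ξ η) = 0 := by
        rw [map_sum]
        simpa only [map_smul] using hker
      have := hu (∑ η : A ⊕ B, s η • Ξ η) ⟨hβv, s, hs0, rfl⟩
      calc (0:ℝ) ≤ ∑ x : A ⊕ B, u x * (∑ η : A ⊕ B, s η • Ξ η) x := this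
        _ = ∑ x : A ⊕ B, ∑ η : A ⊕ B, s η * (u x * Ξ η x) := by
            refine Finset.sum_congr rfl fun x _ => ?_
            rw [Finset.sum_apply, Finset.mul_sum]
            exact Finset.sum_congr rfl fun η _ => by simp [mul_comm, mul_assoc, mul_left_comm]
        _ = ∑ η : A ⊕ B, s η * u' η := by
            rw [Finset.sum_comm]
            exact Finset.sum_congr rfl fun η _ => by rw [← Finset.mul_sum]
    obtain ⟨m, t, ht0, htval⟩ := farkas_cone (fun η => β' (Ξ η)) u' h'
    refine ⟨m, t, ht0, ?_⟩
    have hαm : α m = ∑ η : A ⊕ B, (m (β' (Ξ η))) • Ξs η := by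
      conv_lhs => rw [← expand (α m)]
      exact Finset.sum_congr rfl fun η _ => by rw [hαpair m (Ξ η)]
    rw [hαm, ← Finset.sum_add_distrib]
    conv_lhs => rw [← expand u]
    refine Finset.sum_congr rfl fun η _ => ?_
    rw [← add_smul, ← htval η]
  · -- easy direction
    rintro ⟨m, t, ht0, rfl⟩ v ⟨hker, s, hs0, rfl⟩
    have hsplit : ∀ x : A ⊕ B,
        (α m + ∑ η : A ⊕ B, t η • Ξs η) x * (∑ η : A ⊕ B, s η • Ξ η) x
          = α m x * (∑ η : A ⊕ B, s η • Ξ η) x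
            + ∑ η : A ⊕ B, t η * (Ξs η x * (∑ η' : A ⊕ B, s η' • Ξ η') x) := by
      intro x
      rw [Pi.add_apply, Finset.sum_apply, add_mul, Finset.sum_mul]
      congr 1
      exact Finset.sum_congr rfl fun η _ => by simp [mul_assoc]
    rw [Finset.sum_congr rfl fun x _ => hsplit x, Finset.sum_add_distrib]
    have h1 : ∑ x : A ⊕ B, α m x * (∑ η : A ⊕ B, s η • Ξ η) x = 0 := by
      rw [hαpair, hker, map_zero]
    have h2 : ∀ η : A ⊕ B, ∑ x : A ⊕ B, Ξs η x * (∑ η' : A ⊕ B, s η' • Ξ η') x = s η := by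
      intro η
      have : ∀ x : A ⊕ B, Ξs η x * (∑ η' : A ⊕ B, s η' • Ξ η') x
          = ∑ η' : A ⊕ B, s η' * (Ξs η x * Ξ η' x) := by
        intro x
        rw [Finset.sum_apply, Finset.mul_sum]
        exact Finset.sum_congr rfl fun η' _ => by simp [mul_comm, mul_assoc, mul_left_comm]
      rw [Finset.sum_congr rfl fun x _ => this x, Finset.sum_comm]
      have : ∀ η' : A ⊕ B, ∑ x : A ⊕ B, s η' * (Ξs η x * Ξ η' x)
          = s η' * (if η = η' then 1 else 0) := by
        intro η'
        rw [← Finset.mul_sum, pairdual]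
      rw [Finset.sum_congr rfl fun η' _ => this η']
      simp [Finset.sum_ite_eq]
    rw [h1, zero_add, Finset.sum_comm]
    have h3 : ∀ η : A ⊕ B, ∑ x : A ⊕ B, t η * (Ξs η x * (∑ η' : A ⊕ B, s η' • Ξ η') x)
        = t η * s η := by
      intro η
      rw [← Finset.mul_sum, h2]
    rw [Finset.sum_congr rfl fun η _ => h3 η]
    exact Finset.sum_nonneg fun η _ => mul_nonneg (ht0 η) (hs0 η)
end

section
/- Let k be an algebraically closed field of characteristic zero, r ≥ 1, λ : Fin r → k an injective map with λ(i) ≠ 0 for all i, and b : Fin r → ℤ with ∑_i b(i) = 0. In the field of rational functions RatFunc k, set f := ∏_{i} (X − C(λ i))^(b i), where integer powers are taken in the field RatFunc k. Then f is nonzero, its numerator and denominator have the same degree and the same leading coefficient: f.intDegree = 0 (equivalently, f.num.natDegree = f.denom.natDegree) and f.num.leadingCoeff = f.denom.leadingCoeff (indeed both f.num and f.denom are monic). -/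
open Polynomial

/-- Uniqueness of numerator/denominator: if `f = P/Q` with `P, Q` coprime and `Q` monic,
then `f.num = P` and `f.denom = Q`. -/
theorem ratfunc_num_denom_eq {k : Type*} [Field k] (P Q : k[X]) (hQ : Q.Monic)
    (hcop : IsCoprime P Q) :
    (algebraMap k[X] (RatFunc k) P / algebraMap k[X] (RatFunc k) Q).num = P ∧
    (algebraMap k[X] (RatFunc k) P / algebraMap k[X] (RatFunc k) Q).denom = Q := by
  set f := algebraMap k[X] (RatFunc k) P / algebraMap k[X] (RatFunc k) Q with hf
  have hQ0 : Q ≠ 0 := hQ.ne_zero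
  have key : f.num * Q = P * f.denom :=
    (RatFunc.num_mul_eq_mul_denom_iff hQ0).2 rfl
  have hcop' : IsCoprime f.num f.denom := RatFunc.isCoprime_num_denom f
  have hd1 : f.denom ∣ Q := by
    refine hcop'.symm.dvd_of_dvd_mul_left ?_
    rw [key]; exact dvd_mul_left f.denom P
  have hd2 : Q ∣ f.denom := by
    refine hcop.symm.dvd_of_dvd_mul_left ?_
    rw [← key]; exact dvd_mul_left Q f.num
  have hdenom : f.denom = Q :=
    Polynomial.eq_of_monic_of_associated (RatFunc.monic_denom f) hQ (associated_of_dvd_dvd hd1 hd2)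
  refine ⟨?_, hdenom⟩
  rw [hdenom] at key
  exact mul_right_cancel₀ hQ0 key

/-- For distinct nonzero `λ_i` and integers `b_i` with `∑ b_i = 0`, the rational
function `∏_i (X - λ_i)^{b_i}` is nonzero, has `intDegree` zero, its numerator and
denominator have the same degree and the same leading coefficient (both are monic).
This is Claim 1 in the proof of the main theorem: the curve
`z ↦ ∏_i φ_{b_i}(z - λ_i)` extends over `z = ∞` with value the identity of the torus. -/
theorem prod_zpow_at_infinity
    (k : Type*) [Field k] [IsAlgClosed k] [CharZero k]
    (r : ℕ) (hr : 1 ≤ r)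
    (lam : Fin r → k) (hinj : Function.Injective lam) (hne : ∀ i, lam i ≠ 0)
    (b : Fin r → ℤ) (hb : ∑ i, b i = 0) :
    (∏ i, (RatFunc.X - RatFunc.C (lam i)) ^ (b i)) ≠ 0
    ∧ (∏ i, (RatFunc.X - RatFunc.C (lam i)) ^ (b i)).intDegree = 0
    ∧ (∏ i, (RatFunc.X - RatFunc.C (lam i)) ^ (b i)).num.natDegree
        = (∏ i, (RatFunc.X - RatFunc.C (lam i)) ^ (b i)).denom.natDegree
    ∧ (∏ i, (RatFunc.X - RatFunc.C (lam i)) ^ (b i)).num.leadingCoeff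
        = (∏ i, (RatFunc.X - RatFunc.C (lam i)) ^ (b i)).denom.leadingCoeff
    ∧ (∏ i, (RatFunc.X - RatFunc.C (lam i)) ^ (b i)).num.Monic
    ∧ (∏ i, (RatFunc.X - RatFunc.C (lam i)) ^ (b i)).denom.Monic := by
  set f : RatFunc k := ∏ i, (RatFunc.X - RatFunc.C (lam i)) ^ (b i) with hfdef
  -- the individual linear factors, nonzero
  have hx : ∀ i : Fin r, (RatFunc.X - RatFunc.C (lam i)) ≠ 0 := by
    intro i h
    have := RatFunc.intDegree_X (K := k)
    rw [sub_eq_zero] at h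
    rw [h, RatFunc.intDegree_C] at this
    norm_num at this
  have hf0 : f ≠ 0 := Finset.prod_ne_zero_iff.2 fun i _ => zpow_ne_zero _ (hx i)
  -- numerator and denominator polynomials
  set t : Fin r → ℕ := fun i => (b i).toNat with ht
  set s : Fin r → ℕ := fun i => (-(b i)).toNat with hs
  set P : k[X] := ∏ i, (X - C (lam i)) ^ (t i) with hP
  set Q : k[X] := ∏ i, (X - C (lam i)) ^ (s i) with hQ
  have hPm : P.Monic := monic_prod_of_monic _ _ fun i _ => (monic_X_sub_C _).pow _
  have hQm : Q.Monic := monic_prod_of_monic _ _ fun i _ => (monic_X_sub_C _).pow _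
  -- f = P / Q
  have hfPQ : f = algebraMap k[X] (RatFunc k) P / algebraMap k[X] (RatFunc k) Q := by
    rw [hfdef, hP, hQ, map_prod, map_prod, ← Finset.prod_div_distrib]
    refine Finset.prod_congr rfl fun i _ => ?_
    rw [map_pow, map_pow, map_sub, RatFunc.algebraMap_X, RatFunc.algebraMap_C]
    obtain ⟨m, h | h⟩ := Int.eq_nat_or_neg (b i)
    · simp [ht, hs, h, zpow_natCast]
    · simp only [ht, hs, h, neg_neg, Int.toNat_natCast, Int.toNat_neg_nat, pow_zero]
      rw [zpow_neg, zpow_natCast, one_div]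
  -- coprimality of P and Q
  have hcop : IsCoprime P Q := by
    rw [hP, hQ]
    refine IsCoprime.prod_left fun i _ => IsCoprime.prod_right fun j _ => ?_
    rcases eq_or_ne i j with rfl | hij
    · rcases le_or_gt (b i) 0 with h | h
      · have : t i = 0 := by simp [ht, Int.toNat_of_nonpos h]
        rw [this, pow_zero]; exact isCoprime_one_left
      · have : s i = 0 := by simp [hs]; omega
        rw [this, pow_zero]; exact isCoprime_one_right
    · exact ((pairwise_coprime_X_sub_C hinj) hij).pow
  obtain ⟨hnum, hdenom⟩ := ratfunc_num_denom_eq P Q hQm hcop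
  rw [← hfPQ] at hnum hdenom
  -- degrees
  have hPdeg : P.natDegree = ∑ i, t i := by
    rw [hP, natDegree_prod _ _ fun i _ => pow_ne_zero _ (X_sub_C_ne_zero _)]
    exact Finset.sum_congr rfl fun i _ => by
      rw [natDegree_pow, natDegree_X_sub_C, mul_one]
  have hQdeg : Q.natDegree = ∑ i, s i := by
    rw [hQ, natDegree_prod _ _ fun i _ => pow_ne_zero _ (X_sub_C_ne_zero _)]
    exact Finset.sum_congr rfl fun i _ => by
      rw [natDegree_pow, natDegree_X_sub_C, mul_one]
  have hdeg : f.num.natDegree = f.denom.natDegree := by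
    rw [hnum, hdenom, hPdeg, hQdeg]
    have : (∑ i, (t i : ℤ)) = ∑ i, (s i : ℤ) := by
      rw [← sub_eq_zero, ← Finset.sum_sub_distrib, ← hb]
      refine Finset.sum_congr rfl fun i _ => ?_
      simp only [ht, hs]
      omega
    exact_mod_cast (by push_cast at this ⊢; exact_mod_cast this : ((∑ i, t i : ℕ) : ℤ) = ((∑ i, s i : ℕ) : ℤ))
  have hint : f.intDegree = 0 := by
    rw [RatFunc.intDegree, hdeg, sub_self]
  exact ⟨hf0, hint, hdeg, by rw [hnum, hdenom, hPm.leadingCoeff, hQm.leadingCoeff],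
    hnum ▸ hPm, hdenom ▸ hQm⟩
end
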